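/- Let G be a finite abelian group of order n ≥ 10^{100}, let k ≥ 1, and let S ⊆ G × ℤ^k be a set of words with |S| ≤ 1000. Then the number of functions f : {1,…,k} → G that do not separate S (i.e., for which there exist distinct separable words w, w' ∈ S with π_f(w) = π_f(w')) is at most |S|² · n^{k − 1/5}. -/

import Mathlib

open scoped Classical

/-- The projection of the word `w = (g, z) ∈ G × ℤᵏ` under `f : Fin k → G`, namely
`g + ∑ i, z i • f i`. -/
def proj {G : Type} [AddCommGroup G] {k : ℕ} (f : Fin k → G) (w : G × (Fin k → ℤ)) : G :=
  w.1 + ∑ i, w.2 i • f i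

/-- Two words `w, w'` with difference `(g, z)` are separable if (a) `z i ∈ {1,-1}` for
some `i`, or (b) `z = 0` and `g ≠ 0`, or (c) `z = 3eᵢ - 2eⱼ` or `z = 2eⱼ - 3eᵢ` for some
`i ≠ j`. -/
def Separable {G : Type} [AddCommGroup G] {k : ℕ} (w w' : G × (Fin k → ℤ)) : Prop :=
  (∃ i, (w - w').2 i = 1 ∨ (w - w').2 i = -1) ∨
  ((w - w').2 = 0 ∧ (w - w').1 ≠ 0) ∨
  (∃ i j, i ≠ j ∧
    ((w - w').2 = Pi.single i (3 : ℤ) - Pi.single j (2 : ℤ) ∨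
     (w - w').2 = Pi.single j (2 : ℤ) - Pi.single i (3 : ℤ)))

/-- `f` separates `S` if the projections under `f` of every separable pair of distinct
words of `S` are distinct. -/
def SeparatesSet {G : Type} [AddCommGroup G] {k : ℕ} (f : Fin k → G)
    (S : Finset (G × (Fin k → ℤ))) : Prop :=
  ∀ w ∈ S, ∀ w' ∈ S, w ≠ w' → Separable w w' → proj f w ≠ proj f w'

variable {G : Type} [AddCommGroup G] [Fintype G] [DecidableEq G] {k : ℕ}

omit [Fintype G] [DecidableEq G] in
lemma proj_sub (f : Fin k → G) (w w' : G × (Fin k → ℤ)) :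
    proj f (w - w') = proj f w - proj f w' := by
  simp [proj, sub_smul, Finset.sum_sub_distrib]
  abel

omit [Fintype G] in
lemma proj_update {i j : Fin k} (hij : i ≠ j) (f : Fin k → G) (d : G × (Fin k → ℤ)) :
    proj (Function.update f i (f i - f j))
      (d.1, Function.update d.2 j (d.2 i + d.2 j)) = proj f d := by
  unfold proj
  congr 1
  have split : ∀ (h : Fin k → G), ∑ l, h l
      = (∑ l ∈ (Finset.univ.erase i).erase j, h l + h j) + h i := by
    intro h
    rw [Finset.sum_erase_add _ _ (Finset.mem_erase.2 ⟨hij.symm, Finset.mem_univ j⟩),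
      Finset.sum_erase_add _ _ (Finset.mem_univ i)]
  rw [split, split]
  have hrest : ∑ l ∈ (Finset.univ.erase i).erase j,
      (Function.update d.2 j (d.2 i + d.2 j)) l • (Function.update f i (f i - f j)) l
      = ∑ l ∈ (Finset.univ.erase i).erase j, d.2 l • f l := by
    apply Finset.sum_congr rfl
    intro l hl
    have hlj : l ≠ j := Finset.ne_of_mem_erase hl
    have hli : l ≠ i := Finset.ne_of_mem_erase (Finset.mem_of_mem_erase hl)
    rw [Function.update_of_ne hlj, Function.update_of_ne hli]
  rw [hrest]
  simp only [Function.update_self, Function.update_of_ne hij, Function.update_of_ne hij.symm]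
  rw [add_smul, smul_sub]
  abel

lemma count_coord (d : G × (Fin k → ℤ)) (i : Fin k) (hi : d.2 i = 1 ∨ d.2 i = -1) :
    (Finset.univ.filter (fun f : Fin k → G => proj f d = 0)).card
      ≤ Fintype.card G ^ (k - 1) := by
  have h1 : (Finset.univ.filter (fun f : Fin k → G => proj f d = 0)).card
      ≤ (Finset.univ : Finset ({l : Fin k // l ≠ i} → G)).card := by
    apply Finset.card_le_card_of_injOn (fun f (l : {l : Fin k // l ≠ i}) => f l.1)
      (fun _ _ => Finset.mem_univ _)
    intro f hf f' hf' he
    simp only [Finset.mem_coe, Finset.mem_filter] at hf hf'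
    have heq : ∀ l : Fin k, l ≠ i → f l = f' l := by
      intro l hl
      exact congrFun he ⟨l, hl⟩
    have hsum : ∑ l ∈ Finset.univ.erase i, d.2 l • f l
        = ∑ l ∈ Finset.univ.erase i, d.2 l • f' l :=
      Finset.sum_congr rfl fun l hl => by rw [heq l (Finset.ne_of_mem_erase hl)]
    have e1 : ∑ l ∈ Finset.univ.erase i, d.2 l • f l + d.2 i • f i = ∑ l, d.2 l • f l :=
      Finset.sum_erase_add _ _ (Finset.mem_univ i)
    have e2 : ∑ l ∈ Finset.univ.erase i, d.2 l • f' l + d.2 i • f' i = ∑ l, d.2 l • f' l :=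
      Finset.sum_erase_add _ _ (Finset.mem_univ i)
    have hz : d.2 i • f i = d.2 i • f' i := by
      have h0 : d.1 + (∑ l ∈ Finset.univ.erase i, d.2 l • f l + d.2 i • f i) = 0 := by
        rw [e1]; exact hf.2
      have h0' : d.1 + (∑ l ∈ Finset.univ.erase i, d.2 l • f' l + d.2 i • f' i) = 0 := by
        rw [e2]; exact hf'.2
      rw [hsum] at h0
      have := h0.trans h0'.symm
      exact add_left_cancel (add_left_cancel this)
    have hfi : f i = f' i := by
      rcases hi with h | h <;> rw [h] at hz
      · simpa using hz
      · simpa using neg_injective (by simpa using hz)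
    funext l
    by_cases hl : l = i
    · rw [hl]; exact hfi
    · exact heq l hl
  calc (Finset.univ.filter (fun f : Fin k → G => proj f d = 0)).card
      ≤ (Finset.univ : Finset ({l : Fin k // l ≠ i} → G)).card := h1
    _ = Fintype.card G ^ (k - 1) := by
        rw [Finset.card_univ, Fintype.card_fun]
        congr 1
        rw [Fintype.card_subtype_compl]
        simp [Fintype.card_subtype_eq]

lemma count_change (d : G × (Fin k → ℤ)) {i j : Fin k} (hij : i ≠ j) :
    (Finset.univ.filter (fun f : Fin k → G => proj f d = 0)).card
      ≤ (Finset.univ.filter (fun f : Fin k → G =>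
          proj f (d.1, Function.update d.2 j (d.2 i + d.2 j)) = 0)).card := by
  apply Finset.card_le_card_of_injOn (fun f => Function.update f i (f i - f j))
  · intro f hf
    simp only [Finset.mem_coe, Finset.mem_filter, Finset.mem_univ, true_and] at hf ⊢
    rw [proj_update hij]
    exact hf
  · intro f _ f' _ he
    have hj : f j = f' j := by
      have := congrFun he j
      simpa [Function.update_of_ne hij.symm] using this
    have hi2 : f i = f' i := by
      have := congrFun he i
      simp only [Function.update_self] at this
      have : f i - f j = f' i - f' j := this
      rw [hj] at this
      exact sub_left_injective this
    funext l
    by_cases hl : l = i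
    · rw [hl]; exact hi2
    · have := congrFun he l
      simpa [Function.update_of_ne hl] using this

lemma count_sep (w w' : G × (Fin k → ℤ)) (hsep : Separable w w') :
    (Finset.univ.filter (fun f : Fin k → G => proj f w = proj f w')).card
      ≤ Fintype.card G ^ (k - 1) := by
  have hfe : (Finset.univ.filter (fun f : Fin k → G => proj f w = proj f w'))
      = (Finset.univ.filter (fun f : Fin k → G => proj f (w - w') = 0)) := by
    ext f
    simp [proj_sub, sub_eq_zero]
  rw [hfe]
  set d := w - w' with hd
  rcases hsep with ⟨i, hi⟩ | ⟨hz, hg⟩ | ⟨i, j, hij, hcase⟩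
  · exact count_coord d i hi
  · have : (Finset.univ.filter (fun f : Fin k → G => proj f d = 0)) = ∅ := by
      apply Finset.filter_eq_empty_iff.2
      intro f _
      simp only [proj, hd, hz]
      simpa using hg
    rw [this]
    simp
  · have key : d.2 i + d.2 j = 1 ∨ d.2 i + d.2 j = -1 := by
      rcases hcase with h | h <;> rw [h] <;>
        simp [Pi.single_eq_same, Pi.single_eq_of_ne hij, Pi.single_eq_of_ne hij.symm]
    calc (Finset.univ.filter (fun f : Fin k → G => proj f d = 0)).card
        ≤ (Finset.univ.filter (fun f : Fin k → G =>
            proj f (d.1, Function.update d.2 j (d.2 i + d.2 j)) = 0)).card :=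
          count_change d hij
      _ ≤ Fintype.card G ^ (k - 1) := by
          apply count_coord _ j
          simpa using key

/-- At most `|S|² · n^(k - 1/5)` functions `f : Fin k → G` fail to separate `S`. -/
theorem count_nonseparating_projections
    (G : Type) [AddCommGroup G] [Fintype G] [DecidableEq G]
    (hn : 10 ^ 100 ≤ Fintype.card G) (k : ℕ) (hk : 1 ≤ k)
    (S : Finset (G × (Fin k → ℤ))) (hS : S.card ≤ 1000) :
    ((Finset.univ.filter (fun f : Fin k → G => ¬ SeparatesSet f S)).card : ℝ)
      ≤ (S.card : ℝ) ^ 2 * (Fintype.card G : ℝ) ^ ((k : ℝ) - 1 / 5) := by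
  have hnat : (Finset.univ.filter (fun f : Fin k → G => ¬ SeparatesSet f S)).card
      ≤ S.card ^ 2 * Fintype.card G ^ (k - 1) := by
    have hsub : (Finset.univ.filter (fun f : Fin k → G => ¬ SeparatesSet f S))
        ⊆ (S ×ˢ S).biUnion (fun p => Finset.univ.filter
            (fun f : Fin k → G => p.1 ≠ p.2 ∧ Separable p.1 p.2 ∧ proj f p.1 = proj f p.2)) := by
      intro f hf
      simp only [Finset.mem_filter, Finset.mem_univ, true_and] at hf
      rw [SeparatesSet] at hf
      push_neg at hf
      obtain ⟨w, hw, w', hw', hne, hsep, heq⟩ := hf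
      refine Finset.mem_biUnion.2 ⟨(w, w'), Finset.mem_product.2 ⟨hw, hw'⟩, ?_⟩
      simp only [Finset.mem_filter, Finset.mem_univ, true_and]
      exact ⟨hne, hsep, heq⟩
    calc (Finset.univ.filter (fun f : Fin k → G => ¬ SeparatesSet f S)).card
        ≤ ((S ×ˢ S).biUnion (fun p => Finset.univ.filter
            (fun f : Fin k → G => p.1 ≠ p.2 ∧ Separable p.1 p.2 ∧
              proj f p.1 = proj f p.2))).card := Finset.card_le_card hsub
      _ ≤ ∑ p ∈ S ×ˢ S, (Finset.univ.filter
            (fun f : Fin k → G => p.1 ≠ p.2 ∧ Separable p.1 p.2 ∧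
              proj f p.1 = proj f p.2)).card := Finset.card_biUnion_le
      _ ≤ ∑ _p ∈ S ×ˢ S, Fintype.card G ^ (k - 1) := by
          apply Finset.sum_le_sum
          intro p _
          by_cases hP : p.1 ≠ p.2 ∧ Separable p.1 p.2
          · calc (Finset.univ.filter (fun f : Fin k → G => p.1 ≠ p.2 ∧
                Separable p.1 p.2 ∧ proj f p.1 = proj f p.2)).card
                ≤ (Finset.univ.filter
                    (fun f : Fin k → G => proj f p.1 = proj f p.2)).card := by
                  apply Finset.card_le_card
                  intro f hf
                  simp only [Finset.mem_filter, Finset.mem_univ, true_and] at hf ⊢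
                  exact hf.2.2
              _ ≤ Fintype.card G ^ (k - 1) := count_sep p.1 p.2 hP.2
          · have : (Finset.univ.filter (fun f : Fin k → G => p.1 ≠ p.2 ∧
                Separable p.1 p.2 ∧ proj f p.1 = proj f p.2)) = ∅ := by
              apply Finset.filter_eq_empty_iff.2
              intro f _
              intro h
              exact hP ⟨h.1, h.2.1⟩
            rw [this]
            simp
      _ = S.card ^ 2 * Fintype.card G ^ (k - 1) := by
          rw [Finset.sum_const, Finset.card_product, smul_eq_mul, sq]
  have hN1 : (1 : ℝ) ≤ (Fintype.card G : ℝ) := by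
    have : 1 ≤ Fintype.card G := Fintype.card_pos
    exact_mod_cast this
  calc ((Finset.univ.filter (fun f : Fin k → G => ¬ SeparatesSet f S)).card : ℝ)
      ≤ (S.card : ℝ) ^ 2 * (Fintype.card G : ℝ) ^ (k - 1 : ℕ) := by exact_mod_cast hnat
    _ ≤ (S.card : ℝ) ^ 2 * (Fintype.card G : ℝ) ^ ((k : ℝ) - 1 / 5) := by
        apply mul_le_mul_of_nonneg_left _ (by positivity)
        rw [← Real.rpow_natCast (Fintype.card G : ℝ) (k - 1)]
        apply Real.rpow_le_rpow_of_exponent_le hN1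
        have hcast : ((k - 1 : ℕ) : ℝ) = (k : ℝ) - 1 := by
          rw [Nat.cast_sub hk]; simp
        rw [hcast]
        have : (1 : ℝ) ≤ (k : ℝ) := by exact_mod_cast hk
        linarith
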